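/- Let δ ∈ S* ∪ {λ} and let p, q ∈ Q_δ be conditions with the same trunk, say p = p*_{η,δ,S₁} and q = p*_{η,δ,S₂}. Then p ∩ q = p*_{η,δ,S₁∪S₂} ∈ Q_δ, and p ∩ q is the least upper bound of p and q in Q_δ. -/

import Mathlib

open Set Ordinal

namespace RRF

/-- `C` is a closed unbounded (club) subset of the ordinal `δ`. -/
def ClubIn (C : Set Ordinal) (δ : Ordinal) : Prop :=
  (∀ α < δ, ∃ β ∈ C, α < β ∧ β < δ) ∧
  (∀ α, 0 < α → α < δ → (∀ β < α, ∃ γ ∈ C, β < γ ∧ γ < α) → α ∈ C)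

/-- `S` is stationary in `δ`: it meets every club of `δ`. -/
def StatIn (S : Set Ordinal) (δ : Ordinal) : Prop :=
  ∀ C, ClubIn C δ → (S ∩ C).Nonempty

/-- `S` is tenuous (nowhere stationary): for every ordinal `δ` of
uncountable cofinality, `S ∩ δ` is not stationary in `δ`. -/
def Tenuous (S : Set Ordinal) : Prop :=
  ∀ δ : Ordinal, Cardinal.aleph0 < δ.cof → ¬ StatIn (S ∩ Iio δ) δ

end RRF

namespace RRF

/-- A node: a padded sequence of ordinals, given by its length together with a
function which is `0` from the length onwards. -/
abbrev Node : Type 1 := Ordinal × (Ordinal → Ordinal)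

namespace Node

/-- The length of a node. -/
def lg (η : Node) : Ordinal := η.1

/-- Restriction of a node to length `β`. -/
noncomputable def restrict (η : Node) (β : Ordinal) : Node :=
  (min β η.1, fun ε => if ε < min β η.1 then η.2 ε else 0)

/-- `η ⊴ ν` : `η` is an initial segment of `ν`. -/
def Below (η ν : Node) : Prop := η.1 ≤ ν.1 ∧ ∀ ε < η.1, η.2 ε = ν.2 ε

/-- The empty sequence. -/
def emptyNode : Node := (0, fun _ => 0)

/-- `η⌢⟨j⟩` : the immediate successor of `η` with last value `j`. -/
noncomputable def ext (η : Node) (j : Ordinal) : Node :=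
  (η.1 + 1, fun ε => if ε < η.1 then η.2 ε else if ε = η.1 then j else 0)

end Node

/-- `η` is a genuine (padded) sequence with `η(ε) < θ ε` for `ε < lg η`. -/
def IsSeq (θ : Ordinal → Cardinal) (η : Node) : Prop :=
  (∀ ε < η.1, η.2 ε < (θ ε).ord) ∧ ∀ ε, ¬ ε < η.1 → η.2 ε = 0

/-- `T_{<δ}` : the full tree of sequences of length `< δ`. -/
def Ttree (θ : Ordinal → Cardinal) (δ : Ordinal) : Set Node :=
  {η | η.1 < δ ∧ IsSeq θ η}

/-- `T_ε` : the `ε`-th level of the full tree. -/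
def Level (θ : Ordinal → Cardinal) (ε : Ordinal) : Set Node :=
  {η | η.1 = ε ∧ IsSeq θ η}

/-- `lim_δ(u)` : length-`δ` sequences all of whose proper restrictions lie in `u`. -/
def limNodes (θ : Ordinal → Cardinal) (δ : Ordinal) (u : Set Node) : Set Node :=
  {ν | ν.1 = δ ∧ IsSeq θ ν ∧ ∀ β < δ, ν.restrict β ∈ u}

end RRF

namespace RRF

/-- `p^{[η]}` : the nodes of `p` comparable with `η` which extend `η` or are
initial segments of it. -/
def restrTree (p : Set Node) (η : Node) : Set Node :=
  {ρ ∈ p | Node.Below η ρ ∨ Node.Below ρ η}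

/-- `η` is the trunk of `p` : it is comparable with every node of `p` and is
`⊴`-maximal with this property. -/
def IsTrunk (p : Set Node) (η : Node) : Prop :=
  η ∈ p ∧ (∀ ν ∈ p, Node.Below ν η ∨ Node.Below η ν) ∧
    ∀ η' ∈ p, (∀ ν ∈ p, Node.Below ν η' ∨ Node.Below η' ν) → Node.Below η' η

/-- `p` is a tree: nonempty and closed under restrictions. -/
def IsTree (p : Set Node) : Prop :=
  p.Nonempty ∧ ∀ η ∈ p, ∀ β ≤ η.1, η.restrict β ∈ p

/-- `S_p` : the set of pruning levels of `p` below `δ` — limit levels `δ₁ < δ`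
at which some node has all proper restrictions in `p` but is itself not in `p`. -/
def pruneSet (θ : Ordinal → Cardinal) (δ : Ordinal) (p : Set Node) : Set Ordinal :=
  {δ₁ | δ₁ < δ ∧ Order.IsSuccLimit δ₁ ∧ ∃ η ∈ Level θ δ₁, η ∉ p ∧ ∀ β < δ₁, η.restrict β ∈ p}

/-- `p` is a condition of the forcing `Q⁰_δ`. -/
structure IsCond0 (θ : Ordinal → Cardinal) (Sstar : Set Ordinal) (δ : Ordinal)
    (p : Set Node) : Prop where
  subset : p ⊆ Ttree θ δ
  tree : IsTree p
  trunk : ∃ η, IsTrunk p η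
  levels : ∀ η ∈ p, ∀ β, η.1 ≤ β → β < δ → ∃ ν ∈ p, ν.1 = β ∧ Node.Below η ν
  branches : ∀ η ∈ p, ∃ ν ∈ limNodes θ δ p, Node.Below η ν
  fullSucc : ∀ t, IsTrunk p t → ∀ η ∈ p, Node.Below t η →
      ∀ j < ((θ η.1).ord), η.ext j ∈ p
  pruneSub : pruneSet θ δ p ⊆ Sstar
  pruneTen : Tenuous (pruneSet θ δ p)
  pruneGt : ∀ t, IsTrunk p t → ∀ δ₁ ∈ pruneSet θ δ p, t.1 < δ₁

/-- Compatibility in `Q⁰_δ` (order is reverse inclusion). -/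
def Compat0 (θ : Ordinal → Cardinal) (Sstar : Set Ordinal) (δ : Ordinal)
    (p q : Set Node) : Prop :=
  ∃ r, IsCond0 θ Sstar δ r ∧ r ⊆ p ∧ r ⊆ q

/-- Membership in `Ξ_δ` for a family `⟨q_η : η ∈ Λ⟩`. -/
structure IsXi (θ : Ordinal → Cardinal) (Sstar : Set Ordinal) (δ : Ordinal)
    (Λ : Set Node) (q : Node → Set Node) : Prop where
  sub : Λ ⊆ Ttree θ δ
  cond : ∀ η ∈ Λ, IsCond0 θ Sstar δ (q η)
  trunk : ∀ η ∈ Λ, IsTrunk (q η) η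
  anti : ∀ η ∈ Λ, ∀ ν ∈ Λ, η ≠ ν → η ∉ q ν ∨ ν ∉ q η
  union : IsCond0 θ Sstar δ (⋃ η ∈ Λ, q η)

/-- The coder of `⟨q_η : η ∈ Λ⟩`. -/
def coder (Λ : Set Node) (q : Node → Set Node) : Set (Node × Node) :=
  {x | x.1 ∈ Λ ∧ x.2 ∈ q x.1}

end RRF

namespace RRF

-- The recursively defined condition `p*_{η,δ,S}`, relative to abstract
-- "successful level" data `succl`, `rst` (= `r*_δ`), `Λst` (= `Λ*_δ`) and
-- `qst` (= `⟨q*_{δ,η'}⟩`).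
open Classical in
noncomputable def pstar (θ : Ordinal → Cardinal) (succl : Ordinal → Prop)
    (rst : Ordinal → Set Node) (Λst : Ordinal → Set Node)
    (qst : Ordinal → Node → Set Node) :
    Ordinal → Node → Set Ordinal → Set Node :=
  WellFounded.fix (wellFounded_lt)
    (fun δ rec η S =>
      if sSup S ≤ η.1 then
        -- case (a): `(T_{<δ})^{[η]}`
        restrTree (Ttree θ δ) η
      else if _hmem : sSup S ∈ S then
        if hlt : sSup S < δ then
          if succl (sSup S) then
            -- case (d): last element `δ₁ = sSup S` is successful
            {ν ∈ Ttree θ δ |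
              (ν.1 < sSup S ∧ ν ∈ rec (sSup S) hlt η (S ∩ Set.Iio (sSup S))) ∨
              (sSup S ≤ ν.1 ∧
                ν.restrict (sSup S) ∈
                  limNodes θ (sSup S) (rec (sSup S) hlt η (S ∩ Set.Iio (sSup S))) ∧
                (ν.restrict (sSup S) ∈ limNodes θ (sSup S) (rst (sSup S)) →
                  ∃ η' ∈ Λst (sSup S),
                    ν.restrict (sSup S) ∈ limNodes θ (sSup S) (qst (sSup S) η')))}
          else
            -- case (c): last element `δ₁ = sSup S` is not successful
            {ν ∈ Ttree θ δ |
              (ν.1 < sSup S ∧ ν ∈ rec (sSup S) hlt η (S ∩ Set.Iio (sSup S))) ∨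
              (sSup S ≤ ν.1 ∧
                ν.restrict (sSup S) ∈
                  limNodes θ (sSup S) (rec (sSup S) hlt η (S ∩ Set.Iio (sSup S))))}
        else ∅
      else
        -- case (b): `S` unbounded above `lg η` with no last element
        {ν ∈ Ttree θ δ |
          Node.Below ν η ∨
          (Node.Below η ν ∧
            ((∃ δ₁, ∃ h : δ₁ < δ, δ₁ ∈ S ∧ ν.1 < δ₁ ∧
                ν ∈ rec δ₁ h η (S ∩ Set.Iio δ₁)) ∨
             (sSup S ≤ ν.1 ∧ ∀ δ₁, ∀ h : δ₁ < δ, δ₁ ∈ S → η.1 < δ₁ →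
                ∀ ζ < δ₁, ν.restrict ζ ∈ rec δ₁ h η (S ∩ Set.Iio δ₁))))})

/-- Membership in the main forcing `Q_δ`. -/
def IsCondQ (θ : Ordinal → Cardinal) (succl : Ordinal → Prop)
    (rst Λst : Ordinal → Set Node) (qst : Ordinal → Node → Set Node)
    (Sstar : Set Ordinal) (δ : Ordinal) (p : Set Node) : Prop :=
  ∃ η ∈ Ttree θ δ, ∃ S, S ⊆ Sstar ∩ Set.Iio δ ∧ Tenuous S ∧
    p = pstar θ succl rst Λst qst δ η S

/-- Membership in the forcing `Q'_δ`. -/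
def IsCondQ' (θ : Ordinal → Cardinal) (succl : Ordinal → Prop)
    (rst Λst : Ordinal → Set Node) (qst : Ordinal → Node → Set Node)
    (Sstar : Set Ordinal) (δ : Ordinal) (p : Set Node) : Prop :=
  IsCond0 θ Sstar δ p ∧
  ∀ δ₁ ∈ Sstar, δ₁ < δ → (∀ t, IsTrunk p t → t.1 < δ₁) →
    IsCondQ θ succl rst Λst qst Sstar δ₁ (p ∩ Ttree θ δ₁)

end RRF

namespace RRF

/-! ### Auxiliary lemmas on nodes -/

theorem Node.restrict_fst' (ν : Node) (β : Ordinal) : (ν.restrict β).1 = min β ν.1 := rfl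

theorem Node.restrict_snd' (ν : Node) {β ε : Ordinal} (h : ε < min β ν.1) :
    (ν.restrict β).2 ε = ν.2 ε := if_pos h

theorem Node.restrict_restrict (ν : Node) {β ζ : Ordinal} (h : ζ ≤ β) :
    (ν.restrict β).restrict ζ = ν.restrict ζ := by
  have h1 : min ζ (min β ν.1) = min ζ ν.1 := by
    rw [← min_assoc, min_eq_left h]
  unfold Node.restrict
  refine Prod.ext h1 ?_
  funext ε
  simp only [h1]
  by_cases hε : ε < min ζ ν.1
  · have hε2 : ε < min β ν.1 :=
      lt_min (lt_of_lt_of_le (lt_min_iff.1 hε).1 h) (lt_min_iff.1 hε).2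
    simp only [if_pos hε, if_pos hε2]
  · simp only [if_neg hε]

theorem isSeq_restrict {θ : Ordinal → Cardinal} {ν : Node} (hν : IsSeq θ ν) (β : Ordinal) :
    IsSeq θ (ν.restrict β) := by
  refine ⟨fun ε hε => ?_, fun ε hε => ?_⟩
  · have hε' : ε < min β ν.1 := hε
    rw [Node.restrict_snd' ν hε']
    exact hν.1 ε (hε'.trans_le (min_le_right _ _))
  · exact if_neg hε

theorem restrict_mem_Ttree {θ : Ordinal → Cardinal} {ν : Node} (hν : IsSeq θ ν)
    {β δ₁ : Ordinal} (hβ : β < δ₁) : ν.restrict β ∈ Ttree θ δ₁ :=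
  ⟨lt_of_le_of_lt (min_le_left _ _) hβ, isSeq_restrict hν β⟩

theorem below_restrict_left {η ν : Node} (h : Node.Below η ν) {ζ : Ordinal} (hζ : ζ ≤ η.1) :
    Node.Below (ν.restrict ζ) η := by
  refine ⟨(min_le_left _ _).trans hζ, fun ε hε => ?_⟩
  have hε' : ε < min ζ ν.1 := hε
  rw [Node.restrict_snd' ν hε']
  exact (h.2 ε (lt_of_lt_of_le (hε'.trans_le (min_le_left _ _)) hζ)).symm

theorem below_restrict_right {η ν : Node} (h : Node.Below η ν) {ζ : Ordinal} (hζ : η.1 ≤ ζ) :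
    Node.Below η (ν.restrict ζ) := by
  refine ⟨le_min hζ h.1, fun ε hε => ?_⟩
  rw [Node.restrict_snd' ν (lt_min (hε.trans_le hζ) (hε.trans_le h.1))]
  exact h.2 ε hε

theorem inter_Iio_inter {S : Set Ordinal} {a b : Ordinal} (h : b ≤ a) :
    S ∩ Set.Iio a ∩ Set.Iio b = S ∩ Set.Iio b := by
  rw [Set.inter_assoc, Set.Iio_inter_Iio, min_eq_right h]

section PstarLemmas

variable (θ : Ordinal → Cardinal) (succl : Ordinal → Prop)
  (rst Λst : Ordinal → Set Node) (qst : Ordinal → Node → Set Node)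

/-- The "passing" condition at level `δ₁` for a node `ν` (with `T = S ∩ Iio δ₁`). -/
abbrev Pass (η ν : Node) (δ₁ : Ordinal) (T : Set Ordinal) : Prop :=
  (∀ ζ < δ₁, ν.restrict ζ ∈ pstar θ succl rst Λst qst δ₁ η T) ∧
  (succl δ₁ → ν.restrict δ₁ ∈ limNodes θ δ₁ (rst δ₁) →
    ∃ η' ∈ Λst δ₁, ν.restrict δ₁ ∈ limNodes θ δ₁ (qst δ₁ η'))

/-- Closed form of `p*_{η,δ,S}`. -/
def CFset (δ : Ordinal) (η : Node) (S : Set Ordinal) : Set Node :=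
  {ν | ν ∈ Ttree θ δ ∧ (Node.Below ν η ∨ (Node.Below η ν ∧
    ∀ δ₁ ∈ S, η.1 < δ₁ → δ₁ ≤ ν.1 →
      Pass θ succl rst Λst qst η ν δ₁ (S ∩ Set.Iio δ₁)))}

theorem pass_restrict {η ν : Node} {δ₁ ζ : Ordinal} (h : δ₁ ≤ ζ) (T : Set Ordinal) :
    Pass θ succl rst Λst qst η (ν.restrict ζ) δ₁ T ↔ Pass θ succl rst Λst qst η ν δ₁ T := by
  unfold Pass
  rw [Node.restrict_restrict ν h]
  constructor
  · rintro ⟨h1, h2⟩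
    refine ⟨fun ζ' hζ' => ?_, h2⟩
    have := h1 ζ' hζ'
    rwa [Node.restrict_restrict ν (hζ'.le.trans h)] at this
  · rintro ⟨h1, h2⟩
    refine ⟨fun ζ' hζ' => ?_, h2⟩
    rw [Node.restrict_restrict ν (hζ'.le.trans h)]
    exact h1 ζ' hζ'

theorem mem_limNodes_restrict {ν : Node} (hν : IsSeq θ ν) {s : Ordinal} (hs : s ≤ ν.1)
    (u : Set Node) : ν.restrict s ∈ limNodes θ s u ↔ ∀ ζ < s, ν.restrict ζ ∈ u := by
  constructor
  · rintro ⟨_, _, h⟩ ζ hζ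
    have := h ζ hζ
    rwa [Node.restrict_restrict ν hζ.le] at this
  · intro h
    refine ⟨min_eq_left hs, isSeq_restrict hν s, fun β hβ => ?_⟩
    rw [Node.restrict_restrict ν hβ.le]
    exact h β hβ

open Classical in
theorem pstar_def (δ : Ordinal) (η : Node) (S : Set Ordinal) :
    pstar θ succl rst Λst qst δ η S =
      (if sSup S ≤ η.1 then restrTree (Ttree θ δ) η
      else if sSup S ∈ S then
        if sSup S < δ then
          if succl (sSup S) then
            {ν ∈ Ttree θ δ |
              (ν.1 < sSup S ∧
                ν ∈ pstar θ succl rst Λst qst (sSup S) η (S ∩ Set.Iio (sSup S))) ∨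
              (sSup S ≤ ν.1 ∧
                ν.restrict (sSup S) ∈ limNodes θ (sSup S)
                  (pstar θ succl rst Λst qst (sSup S) η (S ∩ Set.Iio (sSup S))) ∧
                (ν.restrict (sSup S) ∈ limNodes θ (sSup S) (rst (sSup S)) →
                  ∃ η' ∈ Λst (sSup S),
                    ν.restrict (sSup S) ∈ limNodes θ (sSup S) (qst (sSup S) η')))}
          else
            {ν ∈ Ttree θ δ |
              (ν.1 < sSup S ∧
                ν ∈ pstar θ succl rst Λst qst (sSup S) η (S ∩ Set.Iio (sSup S))) ∨
              (sSup S ≤ ν.1 ∧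
                ν.restrict (sSup S) ∈ limNodes θ (sSup S)
                  (pstar θ succl rst Λst qst (sSup S) η (S ∩ Set.Iio (sSup S))))}
        else ∅
      else
        {ν ∈ Ttree θ δ |
          Node.Below ν η ∨
          (Node.Below η ν ∧
            ((∃ δ₁, ∃ _ : δ₁ < δ, δ₁ ∈ S ∧ ν.1 < δ₁ ∧
                ν ∈ pstar θ succl rst Λst qst δ₁ η (S ∩ Set.Iio δ₁)) ∨
             (sSup S ≤ ν.1 ∧ ∀ δ₁, δ₁ < δ → δ₁ ∈ S → η.1 < δ₁ →
                ∀ ζ < δ₁, ν.restrict ζ ∈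
                  pstar θ succl rst Λst qst δ₁ η (S ∩ Set.Iio δ₁))))}) := by
  conv_lhs => rw [pstar]
  rw [WellFounded.fix_eq]
  rfl

theorem pstar_eq : ∀ δ : Ordinal, ∀ (η : Node) (S : Set Ordinal), S ⊆ Set.Iio δ →
    pstar θ succl rst Λst qst δ η S = CFset θ succl rst Λst qst δ η S := by
  intro δ
  induction δ using Ordinal.induction with
  | h δ IH =>
    intro η S hS
    have hbdd : BddAbove S := ⟨δ, fun x hx => (hS hx).le⟩
    rw [pstar_def]
    by_cases hcase1 : sSup S ≤ η.1
    · rw [if_pos hcase1]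
      ext ν
      simp only [restrTree, CFset, Set.mem_sep_iff, Set.mem_setOf_eq]
      constructor
      · rintro ⟨hT, h | h⟩
        · exact ⟨hT, Or.inr ⟨h, fun δ₁ hδ₁ hη₁ _ =>
            absurd ((le_csSup hbdd hδ₁).trans hcase1) (not_le.2 hη₁)⟩⟩
        · exact ⟨hT, Or.inl h⟩
      · rintro ⟨hT, h | ⟨h, _⟩⟩
        · exact ⟨hT, Or.inr h⟩
        · exact ⟨hT, Or.inl h⟩
    · rw [if_neg hcase1]
      have hηs : η.1 < sSup S := not_le.1 hcase1
      have hne : S.Nonempty := by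
        rcases Set.eq_empty_or_nonempty S with h | h
        · rw [h, csSup_empty] at hηs
          exact absurd hηs (not_lt.2 bot_le)
        · exact h
      by_cases hmem : sSup S ∈ S
      · -- cases (c)/(d) : `S` has a maximal element `sSup S`
        have hsδ : sSup S < δ := hS hmem
        rw [if_pos hmem, if_pos hsδ]
        have IHs := IH (sSup S) hsδ η (S ∩ Set.Iio (sSup S)) Set.inter_subset_right
        have key : ∀ ν : Node, ν ∈ Ttree θ δ →
            (((ν.1 < sSup S ∧
                ν ∈ pstar θ succl rst Λst qst (sSup S) η (S ∩ Set.Iio (sSup S))) ∨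
              (sSup S ≤ ν.1 ∧
                (∀ ζ < sSup S, ν.restrict ζ ∈
                  pstar θ succl rst Λst qst (sSup S) η (S ∩ Set.Iio (sSup S))) ∧
                (succl (sSup S) → ν.restrict (sSup S) ∈ limNodes θ (sSup S) (rst (sSup S)) →
                  ∃ η' ∈ Λst (sSup S),
                    ν.restrict (sSup S) ∈ limNodes θ (sSup S) (qst (sSup S) η')))) ↔
             (Node.Below ν η ∨ (Node.Below η ν ∧
               ∀ δ₁ ∈ S, η.1 < δ₁ → δ₁ ≤ ν.1 →
                 Pass θ succl rst Λst qst η ν δ₁ (S ∩ Set.Iio δ₁)))) := by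
          intro ν hT
          constructor
          · rintro (⟨hlt, hmem'⟩ | ⟨hle, hF, hG⟩)
            · rw [IHs] at hmem'
              rcases hmem'.2 with hb | ⟨hην, hpass⟩
              · exact Or.inl hb
              · refine Or.inr ⟨hην, fun δ₁ hδ₁ hη₁ hl₁ => ?_⟩
                have hδ₁s : δ₁ < sSup S := lt_of_le_of_lt hl₁ hlt
                have := hpass δ₁ ⟨hδ₁, hδ₁s⟩ hη₁ hl₁
                rwa [inter_Iio_inter hδ₁s.le] at this
            · have hην : Node.Below η ν := by
                have hρ := hF η.1 hηs
                rw [IHs] at hρ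
                have hρ1 : (ν.restrict η.1).1 = η.1 := min_eq_left (hηs.le.trans hle)
                refine ⟨hηs.le.trans hle, fun ε hε => ?_⟩
                have hεν : ε < min η.1 ν.1 := lt_min hε (hε.trans_le (hηs.le.trans hle))
                rcases hρ.2 with hb | ⟨hb, _⟩
                · exact ((hb.2 ε (by rw [hρ1]; exact hε)).symm).trans
                    (Node.restrict_snd' ν hεν)
                · exact (hb.2 ε hε).trans (Node.restrict_snd' ν hεν)
              refine Or.inr ⟨hην, fun δ₁ hδ₁ hη₁ hl₁ => ?_⟩
              rcases eq_or_lt_of_le (le_csSup hbdd hδ₁) with heq | hlt'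
              · subst heq
                exact ⟨hF, hG⟩
              · have hρ := hF δ₁ hlt'
                rw [IHs] at hρ
                have hρ1 : (ν.restrict δ₁).1 = δ₁ := min_eq_left (hlt'.le.trans hle)
                rcases hρ.2 with hb | ⟨_, hpass⟩
                · exact absurd (hρ1 ▸ hb.1) (not_le.2 hη₁)
                · have hp := hpass δ₁ ⟨hδ₁, hlt'⟩ hη₁ (le_of_eq hρ1.symm)
                  rw [inter_Iio_inter hlt'.le,
                    pass_restrict θ succl rst Λst qst (le_refl δ₁)] at hp
                  exact hp
          · rintro (hb | ⟨hην, hpass⟩)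
            · refine Or.inl ⟨lt_of_le_of_lt hb.1 hηs, ?_⟩
              rw [IHs]
              exact ⟨⟨lt_of_le_of_lt hb.1 hηs, hT.2⟩, Or.inl hb⟩
            · rcases lt_or_ge ν.1 (sSup S) with hlt | hle
              · refine Or.inl ⟨hlt, ?_⟩
                rw [IHs]
                refine ⟨⟨hlt, hT.2⟩, Or.inr ⟨hην, fun δ₁ hδ₁ hη₁ hl₁ => ?_⟩⟩
                rw [inter_Iio_inter hδ₁.2.le]
                exact hpass δ₁ hδ₁.1 hη₁ hl₁
              · have hp := hpass (sSup S) hmem hηs hle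
                exact Or.inr ⟨hle, hp.1, hp.2⟩
        by_cases hsuc : succl (sSup S)
        · rw [if_pos hsuc]
          ext ν
          simp only [CFset, Set.mem_sep_iff, Set.mem_setOf_eq]
          constructor
          · rintro ⟨hT, hd⟩
            refine ⟨hT, (key ν hT).1 ?_⟩
            rcases hd with ⟨h1, h2⟩ | ⟨hle, hlim, hG⟩
            · exact Or.inl ⟨h1, h2⟩
            · exact Or.inr ⟨hle, (mem_limNodes_restrict θ hT.2 hle _).1 hlim, fun _ => hG⟩
          · rintro ⟨hT, hcf⟩
            refine ⟨hT, ?_⟩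
            rcases (key ν hT).2 hcf with h | ⟨hle, hF, hG⟩
            · exact Or.inl h
            · exact Or.inr ⟨hle, (mem_limNodes_restrict θ hT.2 hle _).2 hF, hG hsuc⟩
        · rw [if_neg hsuc]
          ext ν
          simp only [CFset, Set.mem_sep_iff, Set.mem_setOf_eq]
          constructor
          · rintro ⟨hT, hd⟩
            refine ⟨hT, (key ν hT).1 ?_⟩
            rcases hd with ⟨h1, h2⟩ | ⟨hle, hlim⟩
            · exact Or.inl ⟨h1, h2⟩
            · exact Or.inr ⟨hle, (mem_limNodes_restrict θ hT.2 hle _).1 hlim,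
                fun hs => absurd hs hsuc⟩
          · rintro ⟨hT, hcf⟩
            refine ⟨hT, ?_⟩
            rcases (key ν hT).2 hcf with h | ⟨hle, hF, _⟩
            · exact Or.inl h
            · exact Or.inr ⟨hle, (mem_limNodes_restrict θ hT.2 hle _).2 hF⟩
      · -- case (b) : `S` has no maximal element
        rw [if_neg hmem]
        ext ν
        simp only [CFset, Set.mem_sep_iff, Set.mem_setOf_eq]
        constructor
        · rintro ⟨hT, hb | ⟨hην, hE⟩⟩
          · exact ⟨hT, Or.inl hb⟩
          refine ⟨hT, ?_⟩
          rcases hE with ⟨δ₃, hδ₃δ, hδ₃S, hν₃, hmem'⟩ | ⟨hle, hall⟩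
          · rw [IH δ₃ hδ₃δ η _ Set.inter_subset_right] at hmem'
            rcases hmem'.2 with hb | ⟨_, hpass⟩
            · exact Or.inl hb
            · refine Or.inr ⟨hην, fun δ₂ hδ₂ hη₂ hl₂ => ?_⟩
              have hδ₂₃ : δ₂ < δ₃ := lt_of_le_of_lt hl₂ hν₃
              have := hpass δ₂ ⟨hδ₂, hδ₂₃⟩ hη₂ hl₂
              rwa [inter_Iio_inter hδ₂₃.le] at this
          · refine Or.inr ⟨hην, fun δ₂ hδ₂ hη₂ hl₂ => ?_⟩
            refine ⟨hall δ₂ (hS hδ₂) hδ₂ hη₂, ?_⟩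
            have hδ₂s : δ₂ < sSup S :=
              lt_of_le_of_ne (le_csSup hbdd hδ₂) (fun h => hmem (h ▸ hδ₂))
            obtain ⟨δ₃, hδ₃S, hδ₂₃⟩ := exists_lt_of_lt_csSup hne hδ₂s
            have h5 := hall δ₃ (hS hδ₃S) hδ₃S (hη₂.trans hδ₂₃) δ₂ hδ₂₃
            rw [IH δ₃ (hS hδ₃S) η _ Set.inter_subset_right] at h5
            have hρ1 : (ν.restrict δ₂).1 = δ₂ := min_eq_left hl₂
            rcases h5.2 with hb | ⟨_, hpass⟩
            · exact absurd (hρ1 ▸ hb.1) (not_le.2 hη₂)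
            · have hp := hpass δ₂ ⟨hδ₂, hδ₂₃⟩ hη₂ (le_of_eq hρ1.symm)
              rw [inter_Iio_inter hδ₂₃.le,
                pass_restrict θ succl rst Λst qst (le_refl δ₂)] at hp
              exact hp.2
        · rintro ⟨hT, hb | ⟨hην, hpass⟩⟩
          · exact ⟨hT, Or.inl hb⟩
          refine ⟨hT, Or.inr ⟨hην, ?_⟩⟩
          rcases lt_or_ge ν.1 (sSup S) with hlt | hle
          · obtain ⟨δ₃, hδ₃S, hν₃⟩ := exists_lt_of_lt_csSup hne hlt
            refine Or.inl ⟨δ₃, hS hδ₃S, hδ₃S, hν₃, ?_⟩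
            rw [IH δ₃ (hS hδ₃S) η _ Set.inter_subset_right]
            refine ⟨⟨hν₃, hT.2⟩, Or.inr ⟨hην, fun δ₂ hδ₂ hη₂ hl₂ => ?_⟩⟩
            rw [inter_Iio_inter hδ₂.2.le]
            exact hpass δ₂ hδ₂.1 hη₂ hl₂
          · exact Or.inr ⟨hle, fun δ₁ hδ₁δ hδ₁S hη₁ =>
              (hpass δ₁ hδ₁S hη₁ ((le_csSup hbdd hδ₁S).trans hle)).1⟩

theorem passAll {η ν : Node} {δ₁ : Ordinal} {S : Set Ordinal} (hν : IsSeq θ ν)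
    (hην : Node.Below η ν) (hδ₁ν : δ₁ ≤ ν.1)
    (hpass : ∀ δ₂ ∈ S, η.1 < δ₂ → δ₂ ≤ ν.1 →
      Pass θ succl rst Λst qst η ν δ₂ (S ∩ Set.Iio δ₂)) :
    ∀ ζ < δ₁, ν.restrict ζ ∈ pstar θ succl rst Λst qst δ₁ η (S ∩ Set.Iio δ₁) := by
  intro ζ hζ
  rw [pstar_eq θ succl rst Λst qst δ₁ η _ Set.inter_subset_right]
  simp only [CFset, Set.mem_setOf_eq]
  refine ⟨restrict_mem_Ttree hν hζ, ?_⟩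
  by_cases hζη : ζ ≤ η.1
  · exact Or.inl (below_restrict_left hην hζη)
  · refine Or.inr ⟨below_restrict_right hην (not_le.1 hζη).le, fun δ₂ hδ₂ hη₂ hl₂ => ?_⟩
    have hδ₂ζ : δ₂ ≤ ζ := hl₂.trans (min_le_left _ _)
    rw [inter_Iio_inter hδ₂.2.le, pass_restrict θ succl rst Λst qst hδ₂ζ]
    exact hpass δ₂ hδ₂.1 hη₂ (hδ₂.2.le.trans hδ₁ν)

theorem pstar_inter : ∀ δ : Ordinal, ∀ (η : Node) (S₁ S₂ : Set Ordinal),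
    S₁ ⊆ Set.Iio δ → S₂ ⊆ Set.Iio δ →
    pstar θ succl rst Λst qst δ η S₁ ∩ pstar θ succl rst Λst qst δ η S₂ =
      pstar θ succl rst Λst qst δ η (S₁ ∪ S₂) := by
  intro δ
  induction δ using Ordinal.induction with
  | h δ IH =>
    intro η S₁ S₂ h1 h2
    rw [pstar_eq θ succl rst Λst qst δ η S₁ h1, pstar_eq θ succl rst Λst qst δ η S₂ h2,
      pstar_eq θ succl rst Λst qst δ η (S₁ ∪ S₂) (Set.union_subset h1 h2)]
    ext ν
    simp only [CFset, Set.mem_inter_iff, Set.mem_setOf_eq]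
    constructor
    · rintro ⟨⟨hT, hc1⟩, ⟨_, hc2⟩⟩
      refine ⟨hT, ?_⟩
      rcases hc1 with hb | ⟨hην, hp1⟩
      · exact Or.inl hb
      rcases hc2 with hb | ⟨_, hp2⟩
      · exact Or.inl hb
      refine Or.inr ⟨hην, fun δ₁ hδ₁ hη₁ hl₁ => ?_⟩
      have hδ₁δ : δ₁ < δ := by
        rcases hδ₁ with h | h
        · exact h1 h
        · exact h2 h
      refine ⟨fun ζ hζ => ?_, ?_⟩
      · rw [Set.union_inter_distrib_right,
          ← IH δ₁ hδ₁δ η _ _ Set.inter_subset_right Set.inter_subset_right]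
        exact ⟨passAll θ succl rst Λst qst hT.2 hην hl₁ hp1 ζ hζ,
          passAll θ succl rst Λst qst hT.2 hην hl₁ hp2 ζ hζ⟩
      · rcases hδ₁ with h | h
        · exact (hp1 δ₁ h hη₁ hl₁).2
        · exact (hp2 δ₁ h hη₁ hl₁).2
    · rintro ⟨hT, hc⟩
      rcases hc with hb | ⟨hην, hp⟩
      · exact ⟨⟨hT, Or.inl hb⟩, ⟨hT, Or.inl hb⟩⟩
      refine ⟨⟨hT, Or.inr ⟨hην, fun δ₁ hδ₁ hη₁ hl₁ => ?_⟩⟩,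
        ⟨hT, Or.inr ⟨hην, fun δ₁ hδ₁ hη₁ hl₁ => ?_⟩⟩⟩
      · have h := hp δ₁ (Or.inl hδ₁) hη₁ hl₁
        refine ⟨fun ζ hζ => ?_, h.2⟩
        have h5 := h.1 ζ hζ
        rw [Set.union_inter_distrib_right,
          ← IH δ₁ (h1 hδ₁) η _ _ Set.inter_subset_right Set.inter_subset_right] at h5
        exact h5.1
      · have h := hp δ₁ (Or.inr hδ₁) hη₁ hl₁
        refine ⟨fun ζ hζ => ?_, h.2⟩
        have h5 := h.1 ζ hζ
        rw [Set.union_inter_distrib_right,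
          ← IH δ₁ (h2 hδ₁) η _ _ Set.inter_subset_right Set.inter_subset_right] at h5
        exact h5.2

end PstarLemmas

/-! ### Clubs and tenuous sets -/

theorem clubIn_inter {δ : Ordinal} (hcof : Cardinal.aleph0 < δ.cof) {C₁ C₂ : Set Ordinal}
    (h1 : ClubIn C₁ δ) (h2 : ClubIn C₂ δ) : ClubIn (C₁ ∩ C₂) δ := by
  constructor
  · intro α hα
    have step : ∀ x : {x : Ordinal // x < δ}, ∃ z : {x : Ordinal // x < δ}, x.1 < z.1 ∧
        (∃ y ∈ C₁, x.1 < y ∧ y ≤ z.1) ∧ (∃ y ∈ C₂, x.1 < y ∧ y ≤ z.1) := by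
      rintro ⟨x, hx⟩
      obtain ⟨y₁, hy₁C, hxy₁, hy₁δ⟩ := h1.1 x hx
      obtain ⟨y₂, hy₂C, hy₁y₂, hy₂δ⟩ := h2.1 y₁ hy₁δ
      exact ⟨⟨y₂, hy₂δ⟩, hxy₁.trans hy₁y₂, ⟨y₁, hy₁C, hxy₁, hy₁y₂.le⟩,
        ⟨y₂, hy₂C, hxy₁.trans hy₁y₂, le_refl _⟩⟩
    choose next hlt hc1 hc2 using step
    let f : ℕ → {x : Ordinal // x < δ} := fun n =>
      Nat.rec (motive := fun _ => {x : Ordinal // x < δ}) ⟨α, hα⟩ (fun _ p => next p) n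
    have hfs : ∀ n : ℕ, f (n + 1) = next (f n) := fun n => rfl
    have hmono : ∀ n : ℕ, (f n).1 < (f (n + 1)).1 := fun n => by
      rw [hfs]; exact hlt (f n)
    set β := ⨆ n, (f n).1 with hβdef
    have hbdd : BddAbove (Set.range fun n : ℕ => (f n).1) := Ordinal.bddAbove_range _
    have hle : ∀ n, (f n).1 ≤ β := fun n => le_ciSup hbdd n
    have hβδ : β < δ := by
      rw [hβdef]
      exact Ordinal.iSup_lt_ord_lift (c := δ)
        (by simp only [Cardinal.mk_nat, Cardinal.lift_aleph0]; exact hcof) (fun n => (f n).2)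
    have hαβ : α < β := lt_of_lt_of_le (hmono 0) (hle 1)
    have hlimpt : ∀ γ, γ < β → ∃ n, γ < (f n).1 := fun γ hγ => (lt_ciSup_iff hbdd).1 hγ
    have hβ₁ : β ∈ C₁ := by
      refine h1.2 β (lt_of_le_of_lt (zero_le (a := α)) hαβ) hβδ ?_
      intro γ hγ
      obtain ⟨n, hn⟩ := hlimpt γ hγ
      have h := hc1 (f n)
      rw [← hfs n] at h
      obtain ⟨y, hyC, hy₁, hy₂⟩ := h
      exact ⟨y, hyC, hn.trans hy₁,
        lt_of_le_of_lt hy₂ (lt_of_lt_of_le (hmono (n + 1)) (hle (n + 2)))⟩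
    have hβ₂ : β ∈ C₂ := by
      refine h2.2 β (lt_of_le_of_lt (zero_le (a := α)) hαβ) hβδ ?_
      intro γ hγ
      obtain ⟨n, hn⟩ := hlimpt γ hγ
      have h := hc2 (f n)
      rw [← hfs n] at h
      obtain ⟨y, hyC, hy₁, hy₂⟩ := h
      exact ⟨y, hyC, hn.trans hy₁,
        lt_of_le_of_lt hy₂ (lt_of_lt_of_le (hmono (n + 1)) (hle (n + 2)))⟩
    exact ⟨β, ⟨hβ₁, hβ₂⟩, hαβ, hβδ⟩
  · intro α h0 hαδ hcl
    refine ⟨h1.2 α h0 hαδ ?_, h2.2 α h0 hαδ ?_⟩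
    · intro γ hγ
      obtain ⟨x, hx, hl, hl'⟩ := hcl γ hγ
      exact ⟨x, hx.1, hl, hl'⟩
    · intro γ hγ
      obtain ⟨x, hx, hl, hl'⟩ := hcl γ hγ
      exact ⟨x, hx.2, hl, hl'⟩

theorem notStat_union {δ : Ordinal} (hcof : Cardinal.aleph0 < δ.cof) {S₁ S₂ : Set Ordinal}
    (h1 : ¬ StatIn S₁ δ) (h2 : ¬ StatIn S₂ δ) : ¬ StatIn (S₁ ∪ S₂) δ := by
  simp only [StatIn, not_forall, Classical.not_imp] at h1 h2 ⊢
  obtain ⟨C₁, hC₁, hne₁⟩ := h1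
  obtain ⟨C₂, hC₂, hne₂⟩ := h2
  refine ⟨C₁ ∩ C₂, clubIn_inter hcof hC₁ hC₂, ?_⟩
  rintro ⟨x, hxS, hxC⟩
  rcases hxS with h | h
  · exact hne₁ ⟨x, h, hxC.1⟩
  · exact hne₂ ⟨x, h, hxC.2⟩

theorem tenuous_union {S₁ S₂ : Set Ordinal} (h1 : Tenuous S₁) (h2 : Tenuous S₂) :
    Tenuous (S₁ ∪ S₂) := by
  intro δ hcof
  rw [Set.union_inter_distrib_right]
  exact notStat_union hcof (h1 δ hcof) (h2 δ hcof)

/-- for `p = p*_{η,δ,S₁}` and `q = p*_{η,δ,S₂}` with the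
same trunk, `p ∩ q = p*_{η,δ,S₁∪S₂} ∈ Q_δ` is the least upper bound of
`p` and `q` in `Q_δ` (ordered by reverse inclusion). -/
theorem stmt17 (lamc : Cardinal) (hinacc : lamc.IsInaccessible)
    (θ : Ordinal → Cardinal) (hθ : ∀ ε, 2 ≤ θ ε)
    (hθlt : ∀ ε < lamc.ord, (θ ε).ord < lamc.ord)
    (Sstar : Set Ordinal) (hSsub : Sstar ⊆ Set.Iio lamc.ord)
    (hSstat : StatIn Sstar lamc.ord)
    (hSsl : ∀ δ ∈ Sstar, (Ordinal.card δ).IsStrongLimit ∧ (Ordinal.card δ).ord = δ)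
    (hSθ : ∀ δ ∈ Sstar, ∀ ζ < δ, (θ ζ).ord < δ)
    (hrefl : ∀ ε < lamc.ord, StatIn (Sstar ∩ Set.Iio ε) ε →
      (Ordinal.card ε).IsInaccessible)
    (succl : Ordinal → Prop) (rst Λst : Ordinal → Set Node)
    (qst : Ordinal → Node → Set Node)
    (hsucc : ∀ δ₁, succl δ₁ → IsXi θ Sstar δ₁ (Λst δ₁) (qst δ₁) ∧
      rst δ₁ = ⋃ η ∈ Λst δ₁, qst δ₁ η)
    (δ : Ordinal) (hδ : δ ∈ Sstar ∨ δ = lamc.ord)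
    (η : Node) (hη : η ∈ Ttree θ δ)
    (S₁ S₂ : Set Ordinal) (hS₁ : S₁ ⊆ Sstar ∩ Set.Iio δ) (hten₁ : Tenuous S₁)
    (hS₂ : S₂ ⊆ Sstar ∩ Set.Iio δ) (hten₂ : Tenuous S₂) :
    (pstar θ succl rst Λst qst δ η S₁ ∩ pstar θ succl rst Λst qst δ η S₂ =
      pstar θ succl rst Λst qst δ η (S₁ ∪ S₂)) ∧
    IsCondQ θ succl rst Λst qst Sstar δ
      (pstar θ succl rst Λst qst δ η S₁ ∩ pstar θ succl rst Λst qst δ η S₂) ∧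
    (pstar θ succl rst Λst qst δ η S₁ ∩ pstar θ succl rst Λst qst δ η S₂ ⊆
      pstar θ succl rst Λst qst δ η S₁) ∧
    (pstar θ succl rst Λst qst δ η S₁ ∩ pstar θ succl rst Λst qst δ η S₂ ⊆
      pstar θ succl rst Λst qst δ η S₂) ∧
    (∀ r, IsCondQ θ succl rst Λst qst Sstar δ r →
      r ⊆ pstar θ succl rst Λst qst δ η S₁ →
      r ⊆ pstar θ succl rst Λst qst δ η S₂ →
      r ⊆ pstar θ succl rst Λst qst δ η S₁ ∩ pstar θ succl rst Λst qst δ η S₂) := by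
  have h1' : S₁ ⊆ Set.Iio δ := fun x hx => (hS₁ hx).2
  have h2' : S₂ ⊆ Set.Iio δ := fun x hx => (hS₂ hx).2
  have hmain := pstar_inter θ succl rst Λst qst δ η S₁ S₂ h1' h2'
  exact ⟨hmain, ⟨η, hη, S₁ ∪ S₂, Set.union_subset hS₁ hS₂, tenuous_union hten₁ hten₂, hmain⟩,
    Set.inter_subset_left, Set.inter_subset_right,
    fun r _ hr1 hr2 => Set.subset_inter hr1 hr2⟩

end RRF
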